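/- arXiv:1712.06398 — 6 statements merged into one kernel-verified Lean document; each statement's English description precedes it below -/
import Mathlib

section
/- Let V be a finite-dimensional real vector space with dim V = n ≥ 1 and let Q be an anisotropic quadratic form on V (Q(x) = 0 implies x = 0). Let 0 ≤ r ≤ n with r ≡ n (mod 2). Then every product of r vectors ι(x₁)⋯ι(x_r) lies in the real linear span of the set of products of exactly n vectors {ι(y₁)⋯ι(y_n) : y₁,…,y_n ∈ V}. -/
open CliffordAlgebra

private lemma aux_list_span
    (V : Type*) [AddCommGroup V] [Module ℝ V]
    (n : ℕ) (Q : QuadraticForm ℝ V) (hQ : ∀ x : V, Q x = 0 → x = 0)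
    (x₀ : V) (hx₀ : x₀ ≠ 0) :
    ∀ (k : ℕ) (l : List V), l.length + 2 * k = n →
      (l.map (ι Q)).prod ∈
        Submodule.span ℝ
          {z : CliffordAlgebra Q | ∃ y : Fin n → V,
            z = (List.ofFn fun i => ι Q (y i)).prod} := by
  intro k
  induction k with
  | zero =>
    intro l hl
    apply Submodule.subset_span
    refine ⟨fun i : Fin n => l.get ⟨i, by omega⟩, ?_⟩
    congr 1
    refine List.ext_getElem (by simp; omega) ?_
    intro i h1 h2
    simp [List.get]
  | succ k ih =>
    intro l hl
    have hQx : Q x₀ ≠ 0 := fun h => hx₀ (hQ x₀ h)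
    have key := ih (x₀ :: x₀ :: l) (by simp; omega)
    have heq : ((x₀ :: x₀ :: l).map (ι Q)).prod = Q x₀ • (l.map (ι Q)).prod := by
      simp [List.prod_cons, ← mul_assoc, ι_sq_scalar, Algebra.smul_def]
    have : (l.map (ι Q)).prod = (Q x₀)⁻¹ • ((x₀ :: x₀ :: l).map (ι Q)).prod := by
      rw [heq, smul_smul, inv_mul_cancel₀ hQx, one_smul]
    rw [this]
    exact Submodule.smul_mem _ _ key

/-- Let `V` be a finite-dimensional real vector space of dimension `n ≥ 1` with
an anisotropic quadratic form `Q`, and let `0 ≤ r ≤ n` with `r ≡ n (mod 2)`. Then every product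
of `r` vectors `ι x₁ ⋯ ι x_r` lies in the real span of the products of exactly `n` vectors. -/
theorem clifford_product_mem_span_products_of_dim_parity
    (V : Type*) [AddCommGroup V] [Module ℝ V] [FiniteDimensional ℝ V]
    (n : ℕ) (hn : Module.finrank ℝ V = n) (hn1 : 1 ≤ n)
    (Q : QuadraticForm ℝ V) (hQ : ∀ x : V, Q x = 0 → x = 0)
    (r : ℕ) (hr : r ≤ n) (hparity : r % 2 = n % 2) (x : Fin r → V) :
    (List.ofFn fun i => ι Q (x i)).prod ∈
      Submodule.span ℝ
        {z : CliffordAlgebra Q | ∃ y : Fin n → V,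
          z = (List.ofFn fun i => ι Q (y i)).prod} := by
  have : Nontrivial V := by
    rw [← Module.finrank_pos_iff (R := ℝ) (M := V)]
    omega
  obtain ⟨x₀, hx₀⟩ := exists_ne (0 : V)
  have h := aux_list_span V n Q hQ x₀ hx₀ ((n - r) / 2) (List.ofFn x) (by simp; omega)
  simpa [List.map_ofFn, Function.comp_def] using h
end

section
/- Let V be a finite-dimensional real vector space with dim V = n ≥ 1 and let Q be an anisotropic quadratic form on V (Q(x) = 0 implies x = 0). Then CliffordAlgebra Q is spanned as a real vector space by the set of products of exactly n vectors together with the set of products of exactly n−1 vectors, i.e., by {ι(x₁)⋯ι(x_r) : x_i ∈ V, r ∈ {n−1, n}}. -/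
open CliffordAlgebra

namespace CliffordStmt4

variable {V : Type*} [AddCommGroup V] [Module ℝ V] (Q : QuadraticForm ℝ V)

/-- Products of vectors lie in the corresponding power of the range of `ι`. -/
lemma prod_map_mem_pow (l : List V) :
    (l.map (ι Q)).prod ∈ (LinearMap.range (ι Q)) ^ l.length := by
  induction l with
  | nil => simp
  | cons a t ih =>
      rw [List.map_cons, List.prod_cons, List.length_cons, pow_succ']
      exact Submodule.mul_mem_mul (LinearMap.mem_range_self _ a) ih

/-- If `a` already occurs in `l` then `ι a * prod l` lies two degrees lower. -/
lemma mul_prod_mem_of_mem (a : V) (l : List V) (ha : a ∈ l) :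
    ι Q a * (l.map (ι Q)).prod ∈ (LinearMap.range (ι Q)) ^ (l.length - 1) := by
  induction l with
  | nil => simp at ha
  | cons b t ih =>
      rw [List.map_cons, List.prod_cons, ← mul_assoc]
      rcases List.mem_cons.mp ha with rfl | ha
      · rw [ι_sq_scalar, ← Algebra.smul_def]
        simpa using Submodule.smul_mem _ _ (prod_map_mem_pow Q t)
      · have ht : 1 ≤ t.length := List.length_pos_iff.mpr (List.ne_nil_of_mem ha)
        rw [ι_mul_ι_comm, sub_mul, ← Algebra.smul_def]
        have h1 : QuadraticMap.polar Q a b • (t.map (ι Q)).prod ∈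
            (LinearMap.range (ι Q)) ^ ((b :: t).length - 1) := by
          simpa using Submodule.smul_mem _ _ (prod_map_mem_pow Q t)
        have h2 : ι Q b * (ι Q a * (t.map (ι Q)).prod) ∈
            (LinearMap.range (ι Q)) ^ ((b :: t).length - 1) := by
          have := Submodule.mul_mem_mul (LinearMap.mem_range_self (ι Q) b) (ih ha)
          rw [← pow_succ'] at this
          have he : t.length - 1 + 1 = t.length := by omega
          simpa [he] using this
        rw [mul_assoc]
        exact Submodule.sub_mem _ h1 h2


/-- A product of `m` vectors with a repeated entry drops two degrees. -/
lemma ofFn_prod_mem_of_eq {m : ℕ} (x : Fin m → V) {i j : Fin m} (hij : i < j)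
    (hxy : x i = x j) :
    (List.ofFn fun k => ι Q (x k)).prod ∈ (LinearMap.range (ι Q)) ^ (m - 2) := by
  set l : List V := List.ofFn x with hl
  have hlen : l.length = m := by simp [hl]
  have hmap : (List.ofFn fun k => ι Q (x k)) = l.map (ι Q) := by
    rw [hl, List.map_ofFn]; rfl
  have hi : (i : ℕ) < l.length := by rw [hlen]; exact i.2
  have hsplit : l = l.take i ++ (l[(i:ℕ)] :: l.drop (i + 1)) := by
    rw [← List.drop_eq_getElem_cons hi, List.take_append_drop]
  have hgi : l[(i:ℕ)] = x i := by simp [hl]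
  have hmem : x i ∈ l.drop ((i : ℕ) + 1) := by
    have hj : (i : ℕ) + 1 + ((j : ℕ) - ((i : ℕ) + 1)) < l.length := by
      rw [hlen]; omega
    rw [List.mem_iff_getElem]
    refine ⟨(j : ℕ) - ((i : ℕ) + 1), by rw [List.length_drop]; omega, ?_⟩
    rw [List.getElem_drop]
    have hidx : (i : ℕ) + 1 + ((j : ℕ) - ((i : ℕ) + 1)) = (j : ℕ) := by omega
    simp only [hl, List.getElem_ofFn]
    rw [hxy]
    congr 1
    exact Fin.ext (by simpa using hidx)
  have hprodeq : (l.map (ι Q)).prod =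
      ((l.take i).map (ι Q)).prod *
        (ι Q (x i) * ((l.drop ((i:ℕ)+1)).map (ι Q)).prod) := by
    conv_lhs => rw [hsplit]
    rw [List.map_append, List.prod_append, List.map_cons, List.prod_cons, hgi]
  rw [hmap, hprodeq]
  have h1 : ((l.take i).map (ι Q)).prod ∈ (LinearMap.range (ι Q)) ^ (i : ℕ) := by
    have := prod_map_mem_pow Q (l.take i)
    rwa [List.length_take, min_eq_left (le_of_lt hi)] at this
  have h2 : ι Q (x i) * ((l.drop ((i:ℕ)+1)).map (ι Q)).prod ∈
      (LinearMap.range (ι Q)) ^ ((l.drop ((i:ℕ)+1)).length - 1) :=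
    mul_prod_mem_of_mem Q _ _ hmem
  have hdl : (l.drop ((i:ℕ)+1)).length - 1 = m - (i:ℕ) - 2 := by
    rw [List.length_drop, hlen]
    have := j.2; omega
  rw [hdl] at h2
  have harith : (i : ℕ) + (m - (i:ℕ) - 2) = m - 2 := by
    have := j.2; have := i.2; omega
  have := Submodule.mul_mem_mul h1 h2
  rwa [← pow_add, harith] at this

lemma pow_succ_le_pow_pred [FiniteDimensional ℝ V] {n : ℕ}
    (hn : Module.finrank ℝ V = n) :
    (LinearMap.range (ι Q)) ^ (n + 1) ≤ (LinearMap.range (ι Q)) ^ (n - 1) := by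
  set N := (LinearMap.range (ι Q)) ^ (n - 1) with hN
  -- the multilinear map (x₀, …, xₙ) ↦ ι x₀ ⋯ ι xₙ mod N
  set g : MultilinearMap ℝ (fun _ : Fin (n + 1) => V) (CliffordAlgebra Q ⧸ N) :=
    (Submodule.mkQ N).compMultilinearMap
      ((MultilinearMap.mkPiAlgebraFin ℝ (n + 1) (CliffordAlgebra Q)).compLinearMap
        fun _ : Fin (n + 1) => ι Q) with hg
  have gapp : ∀ y : Fin (n + 1) → V,
      g y = Submodule.Quotient.mk ((List.ofFn fun k => ι Q (y k)).prod) := by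
    intro y
    simp [hg, MultilinearMap.mkPiAlgebraFin_apply]
  have key : ∀ y : Fin (n + 1) → V, (List.ofFn fun k => ι Q (y k)).prod ∈ N := by
    let A : AlternatingMap ℝ V (CliffordAlgebra Q ⧸ N) (Fin (n + 1)) :=
      { toMultilinearMap := g
        map_eq_zero_of_eq' := by
          intro v i j hv hne
          rcases hne.lt_or_gt with h | h
          · show g v = 0
            rw [gapp, Submodule.Quotient.mk_eq_zero]
            have := ofFn_prod_mem_of_eq Q v h hv
            simpa [hN, Nat.add_sub_cancel] using this
          · show g v = 0
            rw [gapp, Submodule.Quotient.mk_eq_zero]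
            have := ofFn_prod_mem_of_eq Q v h hv.symm
            simpa [hN, Nat.add_sub_cancel] using this }
    intro y
    have hdep : ¬ LinearIndependent ℝ y := by
      intro h
      have := h.fintype_card_le_finrank
      rw [hn] at this
      simp at this
    have h0 : A y = 0 := A.map_linearDependent y hdep
    have : g y = 0 := by
      have hAg : ∀ z, A z = g z := fun z => rfl
      rw [← hAg]; exact h0
    rwa [gapp, Submodule.Quotient.mk_eq_zero] at this
  rw [Submodule.pow_eq_span_pow_set, Submodule.span_le]
  rintro z hz
  rw [Set.mem_pow] at hz
  obtain ⟨f, rfl⟩ := hz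
  choose xv hxv using fun k => LinearMap.mem_range.mp (SetLike.mem_coe.mp (f k).2)
  have heq : (List.ofFn fun k => ((f k : CliffordAlgebra Q))).prod
      = (List.ofFn fun k => ι Q (xv k)).prod := by
    exact congrArg (fun t => List.prod (List.ofFn t)) (funext fun k => (hxv k).symm)
  rw [SetLike.mem_coe, heq]
  exact key _

lemma one_mem_sq [FiniteDimensional ℝ V] (hr : 1 ≤ Module.finrank ℝ V)
    (hQ : ∀ x : V, Q x = 0 → x = 0) :
    (1 : CliffordAlgebra Q) ∈ (LinearMap.range (ι Q)) ^ 2 := by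
  have : Nontrivial V := by
    have h := Module.finrank_pos_iff (R := ℝ) (M := V)
    exact h.mp (by omega)
  obtain ⟨v, hv⟩ := exists_ne (0 : V)
  have hQv : Q v ≠ 0 := fun h => hv (hQ v h)
  have hmem : ι Q v * ι Q v ∈ (LinearMap.range (ι Q)) ^ 2 := by
    rw [sq]
    exact Submodule.mul_mem_mul (LinearMap.mem_range_self _ v) (LinearMap.mem_range_self _ v)
  have h1 : (Q v)⁻¹ • (ι Q v * ι Q v) = 1 := by
    rw [ι_sq_scalar, Algebra.algebraMap_eq_smul_one, smul_smul, inv_mul_cancel₀ hQv, one_smul]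
  rw [← h1]
  exact Submodule.smul_mem _ _ hmem

lemma pow_le_pow_add_two_mul (h1 : (1 : CliffordAlgebra Q) ∈ (LinearMap.range (ι Q)) ^ 2)
    (i k : ℕ) : (LinearMap.range (ι Q)) ^ i ≤ (LinearMap.range (ι Q)) ^ (i + 2 * k) := by
  have step : ∀ j : ℕ, (LinearMap.range (ι Q)) ^ j ≤ (LinearMap.range (ι Q)) ^ (j + 2) := by
    intro j
    rw [pow_add]
    calc (LinearMap.range (ι Q)) ^ j
        = (LinearMap.range (ι Q)) ^ j * 1 := (Submodule.mul_one _).symm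
      _ ≤ _ := mul_le_mul' le_rfl (Submodule.one_le.mpr h1)
  induction k with
  | zero => simp
  | succ k ih =>
      refine ih.trans ?_
      rw [show i + 2 * (k + 1) = (i + 2 * k) + 2 from by omega]
      exact step _

end CliffordStmt4

open CliffordStmt4

/-- Let `V` be a finite-dimensional real vector space of dimension `n ≥ 1` with
an anisotropic quadratic form `Q`. Then the Clifford algebra of `Q` is spanned, as a real vector
space, by the products of exactly `n` vectors together with the products of exactly `n - 1`
vectors. -/
theorem cliffordAlgebra_span_products_top_degrees
    (V : Type*) [AddCommGroup V] [Module ℝ V] [FiniteDimensional ℝ V]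
    (n : ℕ) (hn : Module.finrank ℝ V = n) (hn1 : 1 ≤ n)
    (Q : QuadraticForm ℝ V) (hQ : ∀ x : V, Q x = 0 → x = 0) :
    Submodule.span ℝ
      {z : CliffordAlgebra Q | ∃ r : ℕ, (r = n - 1 ∨ r = n) ∧ ∃ x : Fin r → V,
        z = (List.ofFn fun i => ι Q (x i)).prod} = ⊤ := by
  set T := Submodule.span ℝ
      {z : CliffordAlgebra Q | ∃ r : ℕ, (r = n - 1 ∨ r = n) ∧ ∃ x : Fin r → V,
        z = (List.ofFn fun i => ι Q (x i)).prod} with hT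
  have hpow_le : ∀ r : ℕ, (r = n - 1 ∨ r = n) → (LinearMap.range (ι Q)) ^ r ≤ T := by
    intro r hr
    rw [Submodule.pow_eq_span_pow_set, Submodule.span_le]
    rintro z hz
    rw [Set.mem_pow] at hz
    obtain ⟨f, rfl⟩ := hz
    choose xv hxv using fun k => LinearMap.mem_range.mp (SetLike.mem_coe.mp (f k).2)
    apply Submodule.subset_span
    exact ⟨r, hr, xv,
      congrArg (fun t => List.prod (List.ofFn t)) (funext fun k => (hxv k).symm)⟩
  have h1sq := one_mem_sq Q (by rw [hn]; exact hn1) hQ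
  have hdown := pow_succ_le_pow_pred Q hn
  have hall : ∀ i : ℕ, (LinearMap.range (ι Q)) ^ i ≤ T := by
    intro i
    induction i using Nat.strong_induction_on with
    | _ i ih =>
      rcases le_or_gt i n with hile | hgt
      · rcases Nat.even_or_odd (n - i) with ⟨k, hk⟩ | ⟨k, hk⟩
        · have he : i + 2 * k = n := by omega
          have h := pow_le_pow_add_two_mul Q h1sq i k
          rw [he] at h
          exact h.trans (hpow_le n (Or.inr rfl))
        · have he : i + 2 * k = n - 1 := by omega
          have h := pow_le_pow_add_two_mul Q h1sq i k
          rw [he] at h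
          exact h.trans (hpow_le (n - 1) (Or.inl rfl))
      · have hi2 : i - 2 < i := by omega
        have hstep : (LinearMap.range (ι Q)) ^ i ≤ (LinearMap.range (ι Q)) ^ (i - 2) := by
          have hsplit : i = (n + 1) + (i - n - 1) := by omega
          have hsplit2 : (n - 1) + (i - n - 1) = i - 2 := by omega
          calc (LinearMap.range (ι Q)) ^ i
              = (LinearMap.range (ι Q)) ^ (n + 1) * (LinearMap.range (ι Q)) ^ (i - n - 1) := by
                rw [← pow_add, ← hsplit]
            _ ≤ (LinearMap.range (ι Q)) ^ (n - 1) * (LinearMap.range (ι Q)) ^ (i - n - 1) :=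
                mul_le_mul' hdown le_rfl
            _ = (LinearMap.range (ι Q)) ^ (i - 2) := by rw [← pow_add, hsplit2]
        exact hstep.trans (ih _ hi2)
  rw [eq_top_iff, ← iSup_ι_range_eq_top (Q := Q)]
  exact iSup_le hall
end

section
/- Let V be a finite-dimensional real vector space with dim V = n ≥ 1, let Q be an anisotropic quadratic form on V, let Δ be a module over CliffordAlgebra Q that is simple (its only CliffordAlgebra Q-submodules are 0 and Δ), and let ψ ∈ Δ be nonzero. Then Δ is spanned as a real vector space by the elements (ι(x₁)⋯ι(x_r)) • ψ with x₁,…,x_r ∈ V and r ∈ {n−1, n}. -/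
open CliffordAlgebra

section Aux

variable {V : Type*} [AddCommGroup V] [Module ℝ V] {Q : QuadraticForm ℝ V}

/-- The `ℝ`-span of products of `r` vectors in the Clifford algebra. -/
noncomputable def Lr (Q : QuadraticForm ℝ V) (r : ℕ) : Submodule ℝ (CliffordAlgebra Q) :=
  Submodule.span ℝ {a | ∃ l : List V, l.length = r ∧ a = (l.map (ι Q)).prod}

lemma prod_mem_Lr (l : List V) : (l.map (ι Q)).prod ∈ Lr Q l.length :=
  Submodule.subset_span ⟨l, rfl, rfl⟩

lemma Lr_mul {r s : ℕ} {a b : CliffordAlgebra Q} (ha : a ∈ Lr Q r) (hb : b ∈ Lr Q s) :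
    a * b ∈ Lr Q (r + s) := by
  induction ha using Submodule.span_induction with
  | mem a h =>
    obtain ⟨l₁, hl₁, rfl⟩ := h
    induction hb using Submodule.span_induction with
    | mem b h =>
      obtain ⟨l₂, hl₂, rfl⟩ := h
      have : (l₁.map (ι Q)).prod * (l₂.map (ι Q)).prod = ((l₁ ++ l₂).map (ι Q)).prod := by
        simp
      rw [this, ← hl₁, ← hl₂, ← List.length_append]
      exact prod_mem_Lr _
    | zero => simp
    | add b c _ _ hb hc => rw [mul_add]; exact add_mem hb hc
    | smul t b _ hb => rw [mul_smul_comm]; exact Submodule.smul_mem _ _ hb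
  | zero => simp
  | add a c _ _ ha hc => rw [add_mul]; exact add_mem ha hc
  | smul t a _ ha => rw [smul_mul_assoc]; exact Submodule.smul_mem _ _ ha

lemma ι_mem_Lr (y : V) : ι Q y ∈ Lr Q 1 := by
  simpa using prod_mem_Lr (Q := Q) [y]

lemma one_mem_Lr : (1 : CliffordAlgebra Q) ∈ Lr Q 0 := by
  simpa using prod_mem_Lr (Q := Q) []

lemma algebraMap_mem_Lr (t : ℝ) : (algebraMap ℝ (CliffordAlgebra Q) t) ∈ Lr Q 0 := by
  rw [Algebra.algebraMap_eq_smul_one]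
  exact Submodule.smul_mem _ _ one_mem_Lr

/-- moving `ι y` across a product of `m` vectors -/
lemma claimC (y : V) (l : List V) :
    ι Q y * (l.map (ι Q)).prod - ((-1 : ℝ) ^ l.length) • ((l.map (ι Q)).prod * ι Q y)
      ∈ Lr Q (l.length - 1) := by
  induction l with
  | nil => simp
  | cons a t IH =>
    have expand : ι Q y * ((a :: t).map (ι Q)).prod
          - ((-1 : ℝ) ^ (a :: t).length) • (((a :: t).map (ι Q)).prod * ι Q y)
        = (QuadraticMap.polar Q y a) • (t.map (ι Q)).prod
          - ι Q a * (ι Q y * (t.map (ι Q)).prod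
              - ((-1 : ℝ) ^ t.length) • ((t.map (ι Q)).prod * ι Q y)) := by
      simp only [List.map_cons, List.prod_cons, List.length_cons]
      rw [← mul_assoc, ι_mul_ι_comm, Algebra.algebraMap_eq_smul_one]
      simp only [pow_succ, mul_neg, mul_one, neg_smul, sub_neg_eq_add, sub_mul,
        smul_mul_assoc, one_mul, mul_sub, mul_smul_comm, mul_assoc]
      abel
    rw [expand]
    rcases t with _ | ⟨b, t'⟩
    · simp only [List.map_nil, List.prod_nil, List.length_nil, pow_zero, one_smul, mul_one,
        one_mul, sub_self, mul_zero, sub_zero, List.length_cons]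
      exact Submodule.smul_mem _ _ one_mem_Lr
    · apply sub_mem
      · exact Submodule.smul_mem _ _ (prod_mem_Lr (b :: t'))
      · have := Lr_mul (ι_mem_Lr a) IH
        simpa [Nat.add_comm] using this

/-- sandwich : `ι y * P * ι y` lies in the span of products of `m` vectors -/
lemma sandwich (y : V) (l : List V) :
    ι Q y * (l.map (ι Q)).prod * ι Q y ∈ Lr Q l.length := by
  rcases l with _ | ⟨a, t⟩
  · simp only [List.map_nil, List.prod_nil, mul_one, List.length_nil]
    rw [ι_sq_scalar]
    exact algebraMap_mem_Lr _
  · have h := claimC (Q := Q) y (a :: t)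
    have hsq : ((a :: t).map (ι Q)).prod * ι Q y * ι Q y
        = Q y • ((a :: t).map (ι Q)).prod := by
      rw [mul_assoc, ι_sq_scalar, ← Algebra.commutes, Algebra.algebraMap_eq_smul_one,
        smul_mul_assoc, one_mul]
    have hrw : ι Q y * ((a :: t).map (ι Q)).prod * ι Q y
        = (((-1:ℝ) ^ (a :: t).length) * Q y) • ((a :: t).map (ι Q)).prod
          + (ι Q y * ((a :: t).map (ι Q)).prod
              - ((-1:ℝ) ^ (a :: t).length) • (((a :: t).map (ι Q)).prod * ι Q y)) * ι Q y := by
      conv_rhs => rw [sub_mul, smul_mul_assoc, hsq, smul_smul]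
      abel
    rw [hrw]
    apply add_mem
    · exact Submodule.smul_mem _ _ (prod_mem_Lr _)
    · have := Lr_mul h (ι_mem_Lr y)
      simpa using this

/-- a product with a duplicated vector drops two degrees -/
lemma dup_prod (l₁ l₂ l₃ : List V) (y : V) :
    ((l₁ ++ y :: (l₂ ++ y :: l₃)).map (ι Q)).prod
      ∈ Lr Q (l₁.length + l₂.length + l₃.length) := by
  have hrw : ((l₁ ++ y :: (l₂ ++ y :: l₃)).map (ι Q)).prod
      = (l₁.map (ι Q)).prod * ((ι Q y * (l₂.map (ι Q)).prod * ι Q y) * (l₃.map (ι Q)).prod) := by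
    simp [List.map_append, List.prod_append, mul_assoc]
  rw [hrw]
  have h2 := Lr_mul (sandwich (Q := Q) y l₂) (prod_mem_Lr l₃)
  have h3 := Lr_mul (prod_mem_Lr l₁) h2
  simpa [Nat.add_assoc] using h3

/-- product over a list with a member repeated afterwards -/
lemma mem_left_prod (A B : List V) (y : V) (hy : y ∈ A) :
    ((A ++ y :: B).map (ι Q)).prod ∈ Lr Q (A.length + B.length - 1) := by
  obtain ⟨s, t, rfl⟩ := List.append_of_mem hy
  have := dup_prod (Q := Q) s t B y
  have harith : s.length + t.length + B.length = (s ++ y :: t).length + B.length - 1 := by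
    simp; omega
  rw [harith] at this
  simpa [List.append_assoc] using this

lemma mem_right_prod (A B : List V) (y : V) (hy : y ∈ B) :
    ((A ++ y :: B).map (ι Q)).prod ∈ Lr Q (A.length + B.length - 1) := by
  obtain ⟨s, t, rfl⟩ := List.append_of_mem hy
  have := dup_prod (Q := Q) A s t y
  have harith : A.length + s.length + t.length = A.length + (s ++ y :: t).length - 1 := by
    simp; omega
  rw [harith] at this
  exact this

/-- a product of linearly dependent vectors drops two degrees -/
lemma dep_prod {r : ℕ} (x : Fin r → V) (hx : ¬ LinearIndependent ℝ x) :
    ((List.ofFn x).map (ι Q)).prod ∈ Lr Q (r - 2) := by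
  obtain ⟨g, hg, j, hgj⟩ := Fintype.not_linearIndependent_iff.mp hx
  set l : List V := List.ofFn x with hl
  have hlen : l.length = r := List.length_ofFn
  set A : List V := l.take j with hA
  set B : List V := l.drop (j + 1) with hB
  have hAlen : A.length = j := by
    rw [hA, List.length_take]
    omega
  have hBlen : B.length = l.length - (j + 1) := by rw [hB, List.length_drop]
  have hsplit : l = A ++ x j :: B := by
    rw [hA, hB]
    conv_lhs => rw [← List.take_append_drop j l]
    congr 1
    rw [List.drop_eq_getElem_cons (by omega)]
    congr 1
    simp [hl]
  have hj := j.isLt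
  -- express ι (x j) as a combination of the other ι (x i)
  have hsum : ι Q (x j) = ∑ i ∈ Finset.univ.erase j, (-(g j)⁻¹ * g i) • ι Q (x i) := by
    have h1 : g j • x j + ∑ i ∈ Finset.univ.erase j, g i • x i = 0 := by
      rw [Finset.add_sum_erase Finset.univ (fun i => g i • x i) (Finset.mem_univ j)]
      exact hg
    have h2 : x j = ∑ i ∈ Finset.univ.erase j, (-(g j)⁻¹ * g i) • x i := by
      have h3 : g j • x j = -∑ i ∈ Finset.univ.erase j, g i • x i := by
        rw [eq_neg_iff_add_eq_zero]; exact h1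
      have h4 := congrArg (fun v => (g j)⁻¹ • v) h3
      simp only [smul_smul, inv_mul_cancel₀ hgj, one_smul, smul_neg, Finset.smul_sum] at h4
      rw [h4, ← Finset.sum_neg_distrib]
      refine Finset.sum_congr rfl fun i _ => ?_
      rw [← neg_smul]
      ring_nf
    rw [h2, map_sum]
    simp only [map_smul]
  -- expand the product
  have hexp : ((A ++ x j :: B).map (ι Q)).prod
      = ∑ i ∈ Finset.univ.erase j,
          (-(g j)⁻¹ * g i) • ((A ++ x i :: B).map (ι Q)).prod := by
    simp only [List.map_append, List.map_cons, List.prod_append, List.prod_cons]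
    rw [hsum, Finset.sum_mul, Finset.mul_sum]
    refine Finset.sum_congr rfl fun i _ => ?_
    rw [smul_mul_assoc, mul_smul_comm]
  have hmain : ((A ++ x j :: B).map (ι Q)).prod ∈ Lr Q (r - 2) := by
    rw [hexp]
    refine Submodule.sum_smul_mem _ _ fun i hi => ?_
    have hij : i ≠ j := Finset.ne_of_mem_erase hi
    have harith : A.length + B.length - 1 = r - 2 := by omega
    rcases lt_or_gt_of_ne (fun h : (i:ℕ) = (j:ℕ) => hij (Fin.ext h)) with h | h
    · have hilen : (i : ℕ) < A.length := by omega
      have hgetA : A[(i:ℕ)] = x i := by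
        simp only [hA, hl, List.getElem_take, List.getElem_ofFn]
      have hiA : x i ∈ A := hgetA ▸ List.getElem_mem hilen
      have := mem_left_prod (Q := Q) A B (x i) hiA
      rwa [harith] at this
    · have hilen : (i : ℕ) - ↑j - 1 < B.length := by omega
      have hgetB : B[(i:ℕ) - ↑j - 1] = x i := by
        simp only [hB, hl, List.getElem_drop, List.getElem_ofFn]
        congr 1
        apply Fin.ext
        simp only [Fin.val_mk]
        omega
      have hiB : x i ∈ B := hgetB ▸ List.getElem_mem hilen
      have := mem_right_prod (Q := Q) A B (x i) hiB
      rwa [harith] at this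
  show (l.map (ι Q)).prod ∈ Lr Q (r - 2)
  rw [hsplit]
  exact hmain


lemma Lr_le_two_more {e : V} (he : Q e ≠ 0) (r : ℕ) : Lr Q r ≤ Lr Q (r + 2) := by
  intro a ha
  have h1 : ι Q e * ι Q e ∈ Lr Q 2 := by
    simpa [mul_assoc] using prod_mem_Lr (Q := Q) [e, e]
  have h2 : ι Q e * ι Q e * a ∈ Lr Q (r + 2) := by
    simpa [Nat.add_comm] using Lr_mul h1 ha
  have key : a = (Q e)⁻¹ • (ι Q e * ι Q e * a) := by
    rw [ι_sq_scalar, Algebra.algebraMap_eq_smul_one, smul_mul_assoc, one_mul, smul_smul,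
      inv_mul_cancel₀ he, one_smul]
  rw [key]
  exact Submodule.smul_mem _ _ h2

lemma Lr_le_add_two_mul {e : V} (he : Q e ≠ 0) (r k : ℕ) : Lr Q r ≤ Lr Q (r + 2 * k) := by
  induction k with
  | zero => simp
  | succ k IH =>
    refine le_trans IH (le_trans (Lr_le_two_more he _) ?_)
    rw [show r + 2 * k + 2 = r + 2 * (k + 1) by ring]

lemma Lr_le_sub_two [FiniteDimensional ℝ V] {n : ℕ} (hn : Module.finrank ℝ V = n)
    (r : ℕ) (hr : n < r) : Lr Q r ≤ Lr Q (r - 2) := by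
  rw [Lr, Submodule.span_le]
  rintro a ⟨l, hlen, rfl⟩
  subst hlen
  have hdep : ¬ LinearIndependent ℝ (fun i : Fin l.length => l.get i) := by
    intro hli
    have := hli.fintype_card_le_finrank
    simp only [Fintype.card_fin, hn] at this
    omega
  have := dep_prod (Q := Q) (fun i => l.get i) hdep
  simpa [List.ofFn_get] using this

lemma Lr_le_target [FiniteDimensional ℝ V] {n : ℕ} (hn : Module.finrank ℝ V = n)
    {e : V} (he : Q e ≠ 0) (r : ℕ) :
    Lr Q r ≤ Lr Q (n - 1) ⊔ Lr Q n := by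
  induction r using Nat.strong_induction_on with
  | _ r IH =>
    rcases le_or_gt r n with hle | hlt
    · rcases Nat.even_or_odd (n - r) with ⟨k, hk⟩ | ⟨k, hk⟩
      · have hrk : r + 2 * k = n := by omega
        exact le_trans (Lr_le_add_two_mul he r k) (hrk ▸ le_sup_right)
      · have hrk : r + 2 * k = n - 1 := by omega
        exact le_trans (Lr_le_add_two_mul he r k) (hrk ▸ le_sup_left)
    · exact le_trans (Lr_le_sub_two hn r hlt) (IH (r - 2) (by omega))

lemma mem_target [FiniteDimensional ℝ V] {n : ℕ} (hn : Module.finrank ℝ V = n)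
    {e : V} (he : Q e ≠ 0) (a : CliffordAlgebra Q) :
    a ∈ Lr Q (n - 1) ⊔ Lr Q n := by
  induction a using CliffordAlgebra.induction with
  | algebraMap t => exact Lr_le_target hn he 0 (algebraMap_mem_Lr t)
  | ι v => exact Lr_le_target hn he 1 (ι_mem_Lr v)
  | add a b ha hb => exact add_mem ha hb
  | mul a b ha hb =>
    obtain ⟨a₁, ha₁, a₂, ha₂, rfl⟩ := Submodule.mem_sup.mp ha
    obtain ⟨b₁, hb₁, b₂, hb₂, rfl⟩ := Submodule.mem_sup.mp hb
    have tle := Lr_le_target (Q := Q) hn he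
    rw [add_mul, mul_add, mul_add]
    exact add_mem
      (add_mem (tle _ (Lr_mul ha₁ hb₁)) (tle _ (Lr_mul ha₁ hb₂)))
      (add_mem (tle _ (Lr_mul ha₂ hb₁)) (tle _ (Lr_mul ha₂ hb₂)))

end Aux

/-- Let `V` be a finite-dimensional real vector space of dimension `n ≥ 1` with
an anisotropic quadratic form `Q`, let `Δ` be a simple module over the Clifford algebra of `Q`
(its only Clifford submodules are `⊥` and `⊤`), and let `ψ ∈ Δ` be nonzero. Then `Δ` is spanned,
as a real vector space, by the elements `(ι x₁ ⋯ ι x_r) • ψ` with `r ∈ {n - 1, n}`. -/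
theorem spinor_module_spanned_by_top_degree_products
    (V : Type*) [AddCommGroup V] [Module ℝ V] [FiniteDimensional ℝ V]
    (n : ℕ) (hn : Module.finrank ℝ V = n) (hn1 : 1 ≤ n)
    (Q : QuadraticForm ℝ V) (hQ : ∀ x : V, Q x = 0 → x = 0)
    (Δ : Type*) [AddCommGroup Δ] [Module ℝ Δ]
    [Module (CliffordAlgebra Q) Δ] [IsScalarTower ℝ (CliffordAlgebra Q) Δ]
    (hsimple : ∀ N : Submodule (CliffordAlgebra Q) Δ, N = ⊥ ∨ N = ⊤)
    (ψ : Δ) (hψ : ψ ≠ 0) :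
    Submodule.span ℝ
      {v : Δ | ∃ r : ℕ, (r = n - 1 ∨ r = n) ∧ ∃ x : Fin r → V,
        v = (List.ofFn fun i => ι Q (x i)).prod • ψ} = ⊤ := by
  set W := Submodule.span ℝ
      {v : Δ | ∃ r : ℕ, (r = n - 1 ∨ r = n) ∧ ∃ x : Fin r → V,
        v = (List.ofFn fun i => ι Q (x i)).prod • ψ} with hW
  -- an anisotropic vector
  have hnontriv : Nontrivial V := by
    apply Module.nontrivial_of_finrank_pos (R := ℝ)
    omega
  obtain ⟨e, he0⟩ := exists_ne (0 : V)
  have he : Q e ≠ 0 := fun h => he0 (hQ e h)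
  -- the action of `Lr` elements on `ψ` lands in `W`
  have hWmem : ∀ r : ℕ, (r = n - 1 ∨ r = n) → ∀ b ∈ Lr Q r, b • ψ ∈ W := by
    intro r hr b hb
    induction hb using Submodule.span_induction with
    | mem b h =>
      obtain ⟨l, hlen, rfl⟩ := h
      apply Submodule.subset_span
      refine ⟨l.length, hlen ▸ hr, l.get, ?_⟩
      congr 1
      rw [show (List.ofFn fun i => ι Q (l.get i)) = l.map (ι Q) by
        rw [show (fun i => ι Q (l.get i)) = (ι Q) ∘ l.get from rfl, ← List.map_ofFn,
          List.ofFn_get]]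
    | zero => simp only [zero_smul]; exact zero_mem W
    | add b c _ _ hbW hcW => rw [add_smul]; exact add_mem hbW hcW
    | smul t b _ hbW => rw [smul_assoc]; exact Submodule.smul_mem _ _ hbW
  -- simplicity : the Clifford span of ψ is everything
  have hNtop : Submodule.span (CliffordAlgebra Q) {ψ} = ⊤ := by
    refine (hsimple _).resolve_left fun h => hψ ?_
    have : ψ ∈ Submodule.span (CliffordAlgebra Q) {ψ} :=
      Submodule.subset_span (Set.mem_singleton ψ)
    rw [h] at this
    simpa using this
  rw [eq_top_iff]
  intro m _
  have hm : m ∈ Submodule.span (CliffordAlgebra Q) {ψ} := hNtop ▸ Submodule.mem_top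
  obtain ⟨a, rfl⟩ := Submodule.mem_span_singleton.mp hm
  obtain ⟨b, hb, c, hc, rfl⟩ := Submodule.mem_sup.mp (mem_target hn he a)
  rw [add_smul]
  exact add_mem (hWmem (n - 1) (Or.inl rfl) b hb) (hWmem n (Or.inr rfl) c hc)
end

section
/- Let V be a finite-dimensional real vector space with dim V = n ≥ 1, let Q be an anisotropic quadratic form on V, let Δ be a real inner product space that is a module over CliffordAlgebra Q and is simple (its only CliffordAlgebra Q-submodules are 0 and Δ), and let ψ ∈ Δ be nonzero. If φ ∈ Δ satisfies ⟨φ, (ι(x₁)⋯ι(x_r)) • ψ⟩ = 0 for all x₁,…,x_r ∈ V and both r = n−1 and r = n, then φ = 0. -/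
open CliffordAlgebra

namespace ClwAux

variable {V : Type*} [AddCommGroup V] [Module ℝ V] (Q : QuadraticForm ℝ V)

noncomputable def pr (L : List V) : CliffordAlgebra Q := (L.map (ι Q)).prod

noncomputable def Dn (k : ℕ) : Submodule ℝ (CliffordAlgebra Q) :=
  Submodule.span ℝ {z | ∃ M : List V, M.length < k ∧ pr Q M = z}

lemma pr_nil : pr Q [] = 1 := rfl
lemma pr_cons (x : V) (L : List V) : pr Q (x :: L) = ι Q x * pr Q L := by simp [pr]
lemma pr_append (L M : List V) : pr Q (L ++ M) = pr Q L * pr Q M := by simp [pr]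

lemma pr_mem_Dn {M : List V} {k : ℕ} (h : M.length < k) : pr Q M ∈ Dn Q k :=
  Submodule.subset_span ⟨M, h, rfl⟩

lemma Dn_mono {k k' : ℕ} (h : k ≤ k') : Dn Q k ≤ Dn Q k' :=
  Submodule.span_mono (fun _ ⟨M, hM, hz⟩ => ⟨M, lt_of_lt_of_le hM h, hz⟩)

lemma mul_mem_Dn {a : CliffordAlgebra Q} {k : ℕ} (ha : a ∈ Dn Q k) (L₁ L₂ : List V) :
    pr Q L₁ * a * pr Q L₂ ∈ Dn Q (k + L₁.length + L₂.length) := by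
  induction ha using Submodule.span_induction with
  | mem z hz =>
    obtain ⟨M, hM, rfl⟩ := hz
    have h2 : pr Q L₁ * pr Q M * pr Q L₂ = pr Q (L₁ ++ M ++ L₂) := by
      simp [pr_append, mul_assoc]
    rw [h2]
    exact pr_mem_Dn Q (by simp; omega)
  | zero => simp
  | add a b _ _ iha ihb =>
    have h2 : pr Q L₁ * (a + b) * pr Q L₂ = pr Q L₁ * a * pr Q L₂ + pr Q L₁ * b * pr Q L₂ := by
      noncomm_ring
    rw [h2]; exact add_mem iha ihb
  | smul r a _ iha =>
    have h2 : pr Q L₁ * (r • a) * pr Q L₂ = r • (pr Q L₁ * a * pr Q L₂) := by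
      simp [mul_smul_comm, smul_mul_assoc]
    rw [h2]; exact Submodule.smul_mem _ _ iha

lemma ix_mul_pr (x : V) (L : List V) :
    ∃ e ∈ Dn Q L.length,
      ι Q x * pr Q L = ((-1 : ℝ) ^ L.length) • (pr Q L * ι Q x) + e := by
  induction L with
  | nil => exact ⟨0, zero_mem _, by simp [pr_nil]⟩
  | cons y L ih =>
    obtain ⟨e, he, hee⟩ := ih
    refine ⟨QuadraticMap.polar Q x y • pr Q L - ι Q y * e, ?_, ?_⟩
    · refine sub_mem (Submodule.smul_mem _ _ (pr_mem_Dn Q (by simp))) ?_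
      have h3 := mul_mem_Dn Q he [y] []
      simpa [pr_cons, pr_nil] using h3
    · have h1 : ι Q x * ι Q y = algebraMap ℝ _ (QuadraticMap.polar Q x y) - ι Q y * ι Q x := by
        have h4 := ι_mul_ι_add_swap (Q := Q) x y
        exact eq_sub_of_add_eq h4
      rw [pr_cons, ← mul_assoc, h1, sub_mul, mul_assoc, hee]
      rw [Algebra.algebraMap_eq_smul_one]
      simp only [pr_cons, List.length_cons, pow_succ, mul_add, mul_smul_comm,
        smul_mul_assoc, mul_assoc, smul_smul, one_mul, smul_one_mul]
      module

lemma dup_mem (A B C : List V) (x : V) :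
    pr Q A * (ι Q x * pr Q B) * (ι Q x * pr Q C) ∈
      Dn Q (A.length + B.length + C.length + 1) := by
  obtain ⟨e, he, hee⟩ := ix_mul_pr Q x B
  have hxx : ι Q x * (ι Q x * pr Q C) = Q x • pr Q C := by
    rw [← mul_assoc, ι_sq_scalar, ← Algebra.smul_def]
  have key : pr Q A * (pr Q B * ι Q x) * (ι Q x * pr Q C) = Q x • pr Q (A ++ B ++ C) := by
    rw [mul_assoc, mul_assoc (pr Q B), hxx, mul_smul_comm, mul_smul_comm,
      pr_append, pr_append, mul_assoc]
  rw [hee, mul_add, add_mul, mul_smul_comm, smul_mul_assoc, key, smul_smul]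
  refine add_mem (Submodule.smul_mem _ _ (pr_mem_Dn Q (by simp; omega))) ?_
  have h2 := mul_mem_Dn Q he A (x :: C)
  rw [← pr_cons]
  exact Dn_mono Q (by simp; omega) h2


lemma reduce (A B : List V) (x : V)
    (hx : x ∈ Submodule.span ℝ {y | y ∈ A ∨ y ∈ B}) :
    pr Q (A ++ x :: B) ∈ Dn Q (A.length + B.length + 1) := by
  classical
  set f : V →ₗ[ℝ] CliffordAlgebra Q :=
    (LinearMap.mulLeft ℝ (pr Q A)).comp
      ((LinearMap.mulRight ℝ (pr Q B)).comp (ι Q : V →ₗ[ℝ] CliffordAlgebra Q)) with hf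
  have hfx : ∀ y : V, f y = pr Q A * (ι Q y * pr Q B) := by
    intro y
    simp [hf, LinearMap.mulLeft, LinearMap.mulRight, mul_assoc]
  have hgen : {y : V | y ∈ A ∨ y ∈ B} ⊆ ↑((Dn Q (A.length + B.length + 1)).comap f) := by
    rintro y (hyA | hyB)
    · obtain ⟨A₁, A₂, rfl⟩ := List.append_of_mem hyA
      simp only [SetLike.mem_coe, Submodule.mem_comap, hfx]
      have h1 : pr Q (A₁ ++ y :: A₂) * (ι Q y * pr Q B)
          = pr Q A₁ * (ι Q y * pr Q A₂) * (ι Q y * pr Q B) := by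
        simp only [pr_append, pr_cons, mul_assoc]
      rw [h1]
      exact Dn_mono Q (by simp only [List.length_append, List.length_cons]; omega) (dup_mem Q A₁ A₂ B y)
    · obtain ⟨B₁, B₂, rfl⟩ := List.append_of_mem hyB
      simp only [SetLike.mem_coe, Submodule.mem_comap, hfx]
      have h1 : pr Q A * (ι Q y * pr Q (B₁ ++ y :: B₂))
          = pr Q A * (ι Q y * pr Q B₁) * (ι Q y * pr Q B₂) := by
        simp only [pr_append, pr_cons, mul_assoc]
      rw [h1]
      exact Dn_mono Q (by simp only [List.length_append, List.length_cons]; omega) (dup_mem Q A B₁ B₂ y)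
  have h2 := Submodule.span_le.mpr hgen hx
  rw [Submodule.mem_comap, hfx] at h2
  rw [pr_append, pr_cons]
  exact h2

variable [FiniteDimensional ℝ V]

lemma long_reduce {L : List V} (h : Module.finrank ℝ V < L.length) :
    pr Q L ∈ Dn Q L.length := by
  classical
  have hni : ¬ LinearIndependent ℝ (fun i : Fin L.length => L[(i : ℕ)]) := by
    intro hli
    have := hli.fintype_card_le_finrank
    simp at this
    omega
  obtain ⟨g, hg0, j, hgj⟩ := Fintype.not_linearIndependent_iff.mp hni
  set A := L.take (j : ℕ) with hA
  set B := L.drop ((j : ℕ) + 1) with hB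
  have hdec : L = A ++ L[(j : ℕ)] :: B := by
    rw [hA, hB, ← List.drop_eq_getElem_cons, List.take_append_drop]
  have hlen : A.length + B.length + 1 = L.length := by
    rw [hA, hB]; simp; omega
  have hmem : L[(j : ℕ)] ∈ Submodule.span ℝ {y : V | y ∈ A ∨ y ∈ B} := by
    have hsum : g j • L[(j : ℕ)] = - ∑ i ∈ Finset.univ.erase j, g i • L[(i : ℕ)] := by
      rw [eq_neg_iff_add_eq_zero, ← Finset.add_sum_erase _ _ (Finset.mem_univ j)] at *
      exact hg0
    have heq : L[(j : ℕ)] = (g j)⁻¹ • (g j • L[(j : ℕ)]) := by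
      rw [smul_smul, inv_mul_cancel₀ hgj, one_smul]
    rw [heq, hsum]
    refine Submodule.smul_mem _ _ (neg_mem (Submodule.sum_mem _ ?_))
    intro i hi
    have hij : i ≠ j := Finset.ne_of_mem_erase hi
    refine Submodule.smul_mem _ _ (Submodule.subset_span ?_)
    rcases lt_or_gt_of_ne (fun h' => hij (Fin.ext h')) with hlt | hgt
    · left
      rw [hA]
      exact List.mem_take_iff_getElem.mpr ⟨(i : ℕ), by omega, rfl⟩
    · right
      rw [hB]
      refine List.mem_drop_iff_getElem.mpr ⟨(i : ℕ) - ((j : ℕ) + 1), by omega, ?_⟩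
      congr 1
      omega
  have hfin := reduce Q A B _ hmem
  rw [← hdec] at hfin
  rwa [hlen] at hfin

lemma all_short (L : List V) : pr Q L ∈ Dn Q (Module.finrank ℝ V + 1) := by
  classical
  suffices h : ∀ k (L : List V), L.length < k → pr Q L ∈ Dn Q (Module.finrank ℝ V + 1) by
    exact h (L.length + 1) L (by omega)
  intro k
  induction k with
  | zero => intro L hL; omega
  | succ k ih =>
    intro L hL
    by_cases hl : L.length ≤ Module.finrank ℝ V
    · exact pr_mem_Dn Q (by omega)
    · have h1 := long_reduce Q (L := L) (by omega)
      have h2 : Dn Q L.length ≤ Dn Q (Module.finrank ℝ V + 1) := by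
        refine Submodule.span_le.mpr ?_
        rintro z ⟨M, hM, rfl⟩
        exact ih M (by omega)
      exact h2 h1

omit [FiniteDimensional ℝ V] in
lemma span_tops (a : CliffordAlgebra Q) :
    a ∈ Submodule.span ℝ {z | ∃ L : List V, pr Q L = z} := by
  induction a using CliffordAlgebra.induction with
  | algebraMap r =>
    rw [Algebra.algebraMap_eq_smul_one]
    exact Submodule.smul_mem _ _ (Submodule.subset_span ⟨[], rfl⟩)
  | ι x =>
    refine Submodule.subset_span ⟨[x], ?_⟩
    simp [pr]
  | mul a b ha hb =>
    induction ha using Submodule.span_induction with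
    | mem z hz =>
      obtain ⟨L, rfl⟩ := hz
      induction hb using Submodule.span_induction with
      | mem w hw =>
        obtain ⟨M, rfl⟩ := hw
        exact Submodule.subset_span ⟨L ++ M, pr_append Q L M⟩
      | zero => simp
      | add u v _ _ ihu ihv => rw [mul_add]; exact add_mem ihu ihv
      | smul r u _ ihu => rw [mul_smul_comm]; exact Submodule.smul_mem _ _ ihu
    | zero => simp
    | add u v _ _ ihu ihv => rw [add_mul]; exact add_mem ihu ihv
    | smul r u _ ihu => rw [smul_mul_assoc]; exact Submodule.smul_mem _ _ ihu
  | add a b ha hb => exact add_mem ha hb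

end ClwAux

open RealInnerProductSpace

/-- Let `V` be a finite-dimensional real vector space of dimension `n ≥ 1` with
an anisotropic quadratic form `Q`, let `Δ` be a real inner product space that is a simple module
over the Clifford algebra of `Q`, and let `ψ ∈ Δ` be nonzero. If `φ ∈ Δ` is orthogonal to all
elements `(ι x₁ ⋯ ι x_r) • ψ` with `r ∈ {n - 1, n}`, then `φ = 0`. -/
theorem orthogonal_to_top_degree_products_eq_zero
    (V : Type*) [AddCommGroup V] [Module ℝ V] [FiniteDimensional ℝ V]
    (n : ℕ) (hn : Module.finrank ℝ V = n) (hn1 : 1 ≤ n)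
    (Q : QuadraticForm ℝ V) (hQ : ∀ x : V, Q x = 0 → x = 0)
    (Δ : Type*) [NormedAddCommGroup Δ] [InnerProductSpace ℝ Δ]
    [Module (CliffordAlgebra Q) Δ] [IsScalarTower ℝ (CliffordAlgebra Q) Δ]
    (hsimple : ∀ N : Submodule (CliffordAlgebra Q) Δ, N = ⊥ ∨ N = ⊤)
    (ψ : Δ) (hψ : ψ ≠ 0)
    (φ : Δ)
    (hφ : ∀ r : ℕ, (r = n - 1 ∨ r = n) → ∀ x : Fin r → V,
      ⟪φ, (List.ofFn fun i => ι Q (x i)).prod • ψ⟫ = 0) :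
    φ = 0 := by
  classical
  haveI : Nontrivial V := Module.finrank_pos_iff (R := ℝ) |>.mp (by rw [hn]; omega)
  obtain ⟨x₀, hx₀⟩ := exists_ne (0 : V)
  have hQx₀ : Q x₀ ≠ 0 := fun h => hx₀ (hQ _ h)
  have key : ∀ m (L : List V), (L.length + 2 * m = n ∨ L.length + 2 * m = n - 1) →
      ⟪φ, ClwAux.pr Q L • ψ⟫ = 0 := by
    intro m
    induction m with
    | zero =>
      intro L hL
      have h := hφ L.length (by omega) (fun i => L[(i : ℕ)])
      have hofn : (List.ofFn fun i : Fin L.length => ι Q L[(i : ℕ)]).prod = ClwAux.pr Q L := by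
        rw [show (List.ofFn fun i : Fin L.length => ι Q L[(i : ℕ)])
            = (List.ofFn fun i : Fin L.length => L[(i : ℕ)]).map (ι Q) from
          List.map_ofFn.symm, List.ofFn_getElem]
        rfl
      rwa [hofn] at h
    | succ m ih =>
      intro L hL
      have h2 := ih (x₀ :: x₀ :: L) (by simp only [List.length_cons]; omega)
      have hpr : ClwAux.pr Q (x₀ :: x₀ :: L) = Q x₀ • ClwAux.pr Q L := by
        rw [ClwAux.pr_cons, ClwAux.pr_cons, ← mul_assoc, ι_sq_scalar, ← Algebra.smul_def]
      rw [hpr, smul_assoc, real_inner_smul_right] at h2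
      exact (mul_eq_zero.mp h2).resolve_left hQx₀
  have short : ∀ L : List V, L.length ≤ n → ⟪φ, ClwAux.pr Q L • ψ⟫ = 0 := by
    intro L hL
    exact key ((n - L.length) / 2) L (by omega)
  have hall : ∀ c : CliffordAlgebra Q, ⟪φ, c • ψ⟫ = 0 := by
    intro c
    have hc : c ∈ ClwAux.Dn Q (n + 1) := by
      have h1 := ClwAux.span_tops Q c
      have h2 : Submodule.span ℝ {z | ∃ L : List V, ClwAux.pr Q L = z}
          ≤ ClwAux.Dn Q (n + 1) := by
        refine Submodule.span_le.mpr ?_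
        rintro z ⟨L, rfl⟩
        have h3 := ClwAux.all_short Q L
        rwa [hn] at h3
      exact h2 h1
    unfold ClwAux.Dn at hc
    induction hc using Submodule.span_induction with
    | mem z hz =>
      obtain ⟨M, hM, rfl⟩ := hz
      exact short M (by omega)
    | zero => simp
    | add a b _ _ iha ihb => rw [add_smul, inner_add_right, iha, ihb, add_zero]
    | smul r a _ iha => rw [smul_assoc, real_inner_smul_right, iha, mul_zero]
  have hspan : Submodule.span (CliffordAlgebra Q) {ψ} = ⊤ := by
    rcases hsimple (Submodule.span (CliffordAlgebra Q) {ψ}) with h | h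
    · exact absurd (Submodule.span_singleton_eq_bot.mp h) hψ
    · exact h
  have hφmem : φ ∈ Submodule.span (CliffordAlgebra Q) {ψ} := by rw [hspan]; trivial
  obtain ⟨c, hc⟩ := Submodule.mem_span_singleton.mp hφmem
  have hz : ⟪φ, φ⟫ = 0 := by nth_rewrite 2 [← hc]; exact hall c
  exact inner_self_eq_zero.mp hz
end

section
/- Let (V,⟪·,·⟫) be a finite-dimensional real inner product space, let Cl(V) be the Clifford algebra of the quadratic form Q(x) = −⟪x,x⟫ with structure map ι, and let Δ be a finite-dimensional real inner product space that is a module over Cl(V) such that Clifford multiplication by vectors is skew-adjoint: ⟨ι(x) • v, w⟩ = −⟨v, ι(x) • w⟩ for all x ∈ V and v, w ∈ Δ. Assume dim Δ = dim V + 1 and let ψ ∈ Δ be nonzero. Then for every φ ∈ Δ with ⟨φ, ψ⟩ = 0 there exists a unique x ∈ V with φ = ι(x) • ψ; that is, the orthogonal complement of ψ equals {ι(x) • ψ : x ∈ V}. -/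
open CliffordAlgebra RealInnerProductSpace

/-- Let `V` be a finite-dimensional real inner product space, `Cl(V)` the
Clifford algebra of `Q x = -⟪x, x⟫`, and `Δ` a finite-dimensional real inner product space that
is a `Cl(V)`-module on which Clifford multiplication by vectors is skew-adjoint. If
`dim Δ = dim V + 1` and `ψ ≠ 0`, then every `φ` orthogonal to `ψ` is `ι x • ψ` for a unique
`x ∈ V`; that is, the orthogonal complement of `ψ` equals `{ι x • ψ : x ∈ V}`. -/
theorem orthogonal_complement_eq_clifford_orbit
    (V : Type*) [NormedAddCommGroup V] [InnerProductSpace ℝ V] [FiniteDimensional ℝ V]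
    (Q : QuadraticForm ℝ V) (hQ : ∀ x : V, Q x = -⟪x, x⟫)
    (Δ : Type*) [NormedAddCommGroup Δ] [InnerProductSpace ℝ Δ] [FiniteDimensional ℝ Δ]
    [Module (CliffordAlgebra Q) Δ] [IsScalarTower ℝ (CliffordAlgebra Q) Δ]
    (hskew : ∀ (x : V) (v w : Δ), ⟪ι Q x • v, w⟫ = -⟪v, ι Q x • w⟫)
    (hdim : Module.finrank ℝ Δ = Module.finrank ℝ V + 1)
    (ψ : Δ) (hψ : ψ ≠ 0) :
    (∀ φ : Δ, ⟪φ, ψ⟫ = 0 → ∃! x : V, φ = ι Q x • ψ) ∧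
    {φ : Δ | ⟪φ, ψ⟫ = 0} = {φ : Δ | ∃ x : V, φ = ι Q x • ψ} := by
  -- orthogonality of the orbit
  have horth : ∀ x : V, ⟪ψ, ι Q x • ψ⟫ = 0 := by
    intro x
    have h := hskew x ψ ψ
    have h2 : ⟪ψ, ι Q x • ψ⟫ = -⟪ψ, ι Q x • ψ⟫ := by
      rw [← h, real_inner_comm]
    linarith
  -- injectivity statement
  have hinj0 : ∀ x : V, ι Q x • ψ = 0 → x = 0 := by
    intro x hx
    have h1 : ι Q x • (ι Q x • ψ) = (0 : Δ) := by rw [hx, smul_zero]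
    rw [smul_smul, ι_sq_scalar, algebraMap_smul, hQ] at h1
    have h2 : (⟪x, x⟫ : ℝ) • ψ = 0 := by
      rw [neg_smul] at h1
      simpa using h1
    rcases smul_eq_zero.mp h2 with h | h
    · exact inner_self_eq_zero.mp h
    · exact absurd h hψ
  set W := (ℝ ∙ ψ)ᗮ with hW
  have hmemW : ∀ x : V, ι Q x • ψ ∈ W := by
    intro x
    rw [hW, Submodule.mem_orthogonal]
    intro u hu
    rcases Submodule.mem_span_singleton.mp hu with ⟨r, rfl⟩
    rw [real_inner_smul_left, horth, mul_zero]
  -- linear map into W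
  let L : V →ₗ[ℝ] W :=
    { toFun := fun x => ⟨ι Q x • ψ, hmemW x⟩
      map_add' := fun x y => by ext; simp [add_smul]
      map_smul' := fun r x => by
        ext
        simp [map_smul, ← smul_assoc, smul_eq_mul, algebraMap_smul] }
  have hLinj : Function.Injective L := by
    rw [injective_iff_map_eq_zero]
    intro x hx
    apply hinj0
    have := congrArg Subtype.val hx
    simpa [L] using this
  have hrank : Module.finrank ℝ V = Module.finrank ℝ W := by
    have h1 : Module.finrank ℝ (ℝ ∙ ψ) = 1 := finrank_span_singleton hψ
    have h2 := Submodule.finrank_add_finrank_orthogonal (K := ℝ ∙ ψ) (𝕜 := ℝ)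
    rw [hW]
    omega
  have hLsurj : Function.Surjective L :=
    (LinearMap.injective_iff_surjective_of_finrank_eq_finrank hrank).mp hLinj
  have key : ∀ φ : Δ, ⟪φ, ψ⟫ = 0 → ∃! x : V, φ = ι Q x • ψ := by
    intro φ hφ
    have hφW : φ ∈ W := by
      rw [hW, Submodule.mem_orthogonal]
      intro u hu
      rcases Submodule.mem_span_singleton.mp hu with ⟨r, rfl⟩
      rw [real_inner_smul_left, real_inner_comm, hφ, mul_zero]
    obtain ⟨x, hx⟩ := hLsurj ⟨φ, hφW⟩
    refine ⟨x, ?_, ?_⟩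
    · have := congrArg Subtype.val hx
      simpa [L] using this.symm
    · intro y hy
      apply hLinj
      ext
      have := congrArg Subtype.val hx
      simp only [L, LinearMap.coe_mk, AddHom.coe_mk] at this ⊢
      rw [this, ← hy]
  refine ⟨key, ?_⟩
  ext φ
  constructor
  · intro h
    exact ⟨(key φ h).choose, (key φ h).choose_spec.1⟩
  · rintro ⟨x, rfl⟩
    show ⟪ι Q x • ψ, ψ⟫ = 0
    rw [real_inner_comm]
    exact horth x
end

section
/- Let V be a finite-dimensional real inner product space, let ξ ∈ V be a unit vector, and let h be a symmetric bilinear form on V. Then h(w, w′) = 0 for all w, w′ ∈ V orthogonal to ξ if and only if there exists a vector v ∈ V with h = 2 ξ ⊙ v, where (ξ ⊙ v)(x,y) = (1/2)(⟪ξ,x⟫⟪v,y⟫ + ⟪v,x⟫⟪ξ,y⟫); moreover such a v is unique. -/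
open RealInnerProductSpace

/-- Let `V` be a finite-dimensional real inner product space, `ξ` a unit
vector, and `h` a symmetric bilinear form on `V`. Then `h` vanishes on the orthogonal complement
of `ξ` if and only if `h = 2 ξ ⊙ v` for a (unique) vector `v`, where
`(ξ ⊙ v)(x, y) = (1/2) * (⟪ξ, x⟫ * ⟪v, y⟫ + ⟪v, x⟫ * ⟪ξ, y⟫)`. -/
theorem symmetric_form_vanishing_on_complement_iff_sym_product
    (V : Type*) [NormedAddCommGroup V] [InnerProductSpace ℝ V] [FiniteDimensional ℝ V]
    (ξ : V) (hξ : ‖ξ‖ = 1)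
    (h : V →ₗ[ℝ] V →ₗ[ℝ] ℝ) (hsymm : ∀ x y : V, h x y = h y x) :
    (∀ w w' : V, ⟪ξ, w⟫ = 0 → ⟪ξ, w'⟫ = 0 → h w w' = 0) ↔
    (∃! v : V, ∀ x y : V,
      h x y = 2 * ((1 / 2) * (⟪ξ, x⟫ * ⟪v, y⟫ + ⟪v, x⟫ * ⟪ξ, y⟫))) := by
  have hξξ : ⟪ξ, ξ⟫ = 1 := by
    have := real_inner_self_eq_norm_sq ξ
    rw [hξ] at this; simpa using this
  constructor
  · intro hvan
    set v : V := (InnerProductSpace.toDual ℝ V).symm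
        (LinearMap.toContinuousLinearMap (h ξ)) - (h ξ ξ / 2) • ξ with hv
    have hvw : ∀ y : V, ⟪v, y⟫ = h ξ y - (h ξ ξ / 2) * ⟪ξ, y⟫ := by
      intro y
      rw [hv, inner_sub_left, real_inner_smul_left,
        InnerProductSpace.toDual_symm_apply]
      simp
    refine ⟨v, ?_, ?_⟩
    · intro x y
      have hx : ⟪ξ, x - ⟪ξ, x⟫ • ξ⟫ = 0 := by
        rw [inner_sub_right, real_inner_smul_right, hξξ]; ring
      have hy : ⟪ξ, y - ⟪ξ, y⟫ • ξ⟫ = 0 := by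
        rw [inner_sub_right, real_inner_smul_right, hξξ]; ring
      have key := hvan _ _ hx hy
      have hexp : h (x - ⟪ξ, x⟫ • ξ) (y - ⟪ξ, y⟫ • ξ)
          = h x y - ⟪ξ, y⟫ * h x ξ - ⟪ξ, x⟫ * h ξ y + ⟪ξ, x⟫ * ⟪ξ, y⟫ * h ξ ξ := by
        simp only [map_sub, map_smul, LinearMap.sub_apply, LinearMap.smul_apply,
          smul_eq_mul]
        ring
      rw [hexp] at key
      have hxy : h x y = ⟪ξ, y⟫ * h x ξ + ⟪ξ, x⟫ * h ξ y - ⟪ξ, x⟫ * ⟪ξ, y⟫ * h ξ ξ := by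
        linarith
      rw [hxy, hvw x, hvw y, hsymm x ξ]
      ring
    · intro v' hv'
      have hdiff : ∀ y : V, ⟪v' - v, y⟫ = 0 := by
        intro y
        have h1 := hv' ξ y
        have h2 : h ξ y = 2 * ((1 / 2) * (⟪ξ, ξ⟫ * ⟪v, y⟫ + ⟪v, ξ⟫ * ⟪ξ, y⟫)) := by
          rw [hvw y, hvw ξ, hξξ]; ring
        have hvy : ⟪v', y⟫ + ⟪v', ξ⟫ * ⟪ξ, y⟫ = ⟪v, y⟫ + ⟪v, ξ⟫ * ⟪ξ, y⟫ := by
          rw [h2] at h1; rw [hξξ] at h1; nlinarith [h1]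
        have hvξ : ⟪v', ξ⟫ = ⟪v, ξ⟫ := by
          have := hvy; -- specialize pattern at y = ξ separately
          have h1ξ := hv' ξ ξ
          have h2ξ : h ξ ξ = 2 * ((1 / 2) * (⟪ξ, ξ⟫ * ⟪v, ξ⟫ + ⟪v, ξ⟫ * ⟪ξ, ξ⟫)) := by
            rw [hvw ξ, hξξ]; ring
          rw [hξξ] at h1ξ h2ξ
          nlinarith [h1ξ, h2ξ]
        rw [inner_sub_left]
        rw [hvξ] at hvy
        linarith
      have : v' - v = 0 := by
        have := hdiff (v' - v)
        exact inner_self_eq_zero.mp this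
      exact sub_eq_zero.mp this
  · rintro ⟨v, hv, -⟩ w w' hw hw'
    rw [hv w w', hw, hw']; ring
end
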